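/- Let V be a finite set partitioned into pairwise disjoint nonempty subsets V_1, …, V_T, let f : Finset V → ℝ be a monotone submodular set function with f(∅) = 0, and let Γ ≥ 1 be a real number. Suppose a greedy procedure builds sets ∅ = G_0 ⊆ G_1 ⊆ ⋯ ⊆ G_T by choosing at each step t an element g_t ∈ V_t with G_t = G_{t−1} ∪ {g_t} such that f(G_t) − f(G_{t−1}) ≥ (1/(3Γ)) · (f(G_{t−1} ∪ {v}) − f(G_{t−1})) for every v ∈ V_t. Then for every set S ⊆ V with |S ∩ V_t| ≤ 1 for all t, one has f(G_T) ≥ (1/(3Γ+1)) · f(S). -/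
import Mathlib

lemma marg_sum {V : Type*} [DecidableEq V] (f : Finset V → ℝ)
    (hsub : ∀ B A A' : Finset V, A' ⊆ A → f (A ∪ B) - f A ≤ f (A' ∪ B) - f A') :
    ∀ S A : Finset V, f (A ∪ S) - f A ≤ ∑ v ∈ S, (f (insert v A) - f A) := by
  intro S
  induction S using Finset.induction_on with
  | empty => intro A; simp
  | @insert a s hnotmem ih =>
    intro A
    rw [Finset.sum_insert hnotmem]
    have h1 : f ((A ∪ s) ∪ {a}) - f (A ∪ s) ≤ f (A ∪ {a}) - f A :=
      hsub {a} (A ∪ s) A Finset.subset_union_left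
    have h2 := ih A
    have e1 : A ∪ insert a s = (A ∪ s) ∪ {a} := by
      ext x; simp [or_comm, or_assoc, or_left_comm]
    have e2 : A ∪ {a} = insert a A := by ext x; simp [or_comm]
    rw [e1]
    rw [e2] at h1
    linarith

/-- Competitive ratio of GADGET (Theorem 4): a temporally greedy schedule using a
`1/(3Γ)`-approximation in each time slot attains at least a `1/(3Γ+1)` fraction of the
value of any feasible schedule (at most one element per part). -/
theorem stmt_11 {V : Type*} [Fintype V] [DecidableEq V] (T : ℕ)
    (parts : Fin T → Finset V)
    (hne : ∀ t, (parts t).Nonempty)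
    (hdisj : ∀ t t', t ≠ t' → Disjoint (parts t) (parts t'))
    (hcover : ∀ v : V, ∃ t, v ∈ parts t)
    (f : Finset V → ℝ)
    (hmono : ∀ A B : Finset V, A ⊆ B → f A ≤ f B)
    (hsub : ∀ B A A' : Finset V, A' ⊆ A → f (A ∪ B) - f A ≤ f (A' ∪ B) - f A')
    (hf0 : f ∅ = 0)
    (Γ : ℝ) (hΓ : 1 ≤ Γ)
    (G : ℕ → Finset V) (g : Fin T → V)
    (hG0 : G 0 = ∅)
    (hg : ∀ t : Fin T, g t ∈ parts t)
    (hGsucc : ∀ t : Fin T, G ((t : ℕ) + 1) = insert (g t) (G (t : ℕ)))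
    (hgreedy : ∀ t : Fin T, ∀ v ∈ parts t,
      f (G ((t : ℕ) + 1)) - f (G (t : ℕ)) ≥
        (1 / (3 * Γ)) * (f (insert v (G (t : ℕ))) - f (G (t : ℕ)))) :
    ∀ S : Finset V, (∀ t : Fin T, (S ∩ parts t).card ≤ 1) →
      f (G T) ≥ (1 / (3 * Γ + 1)) * f S := by
  intro S hS
  have hΓ3 : (0:ℝ) < 3 * Γ := by linarith
  -- chain inclusions
  have hstep : ∀ n, n < T → G n ⊆ G (n + 1) := by
    intro n hn
    have := hGsucc ⟨n, hn⟩
    simp only at this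
    rw [this]
    exact Finset.subset_insert _ _
  have hchain : ∀ m n, m ≤ n → n ≤ T → G m ⊆ G n := by
    intro m n hmn hnT
    induction n with
    | zero => simpa [Nat.le_zero.mp hmn] using Finset.Subset.refl (G 0)
    | succ k ih =>
      rcases Nat.lt_or_ge m (k+1) with h | h
      · exact (ih (Nat.lt_succ_iff.mp h) (le_trans (Nat.le_succ k) hnT)).trans
          (hstep k (Nat.lt_of_succ_le hnT))
      · have : m = k + 1 := le_antisymm hmn h
        simp [this]
  -- per-slot gains
  set D : Fin T → ℝ := fun t => f (G ((t:ℕ)+1)) - f (G (t:ℕ)) with hD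
  have hDnonneg : ∀ t, 0 ≤ D t := by
    intro t
    have : G (t:ℕ) ⊆ G ((t:ℕ)+1) := hstep _ t.isLt
    have := hmono _ _ this
    simp [hD]; linarith
  have hDsum : ∑ t : Fin T, D t = f (G T) := by
    have := Finset.sum_range_sub (fun i => f (G i)) T
    rw [hD, Fin.sum_univ_eq_sum_range (fun i => f (G (i+1)) - f (G i)) T, this, hG0, hf0]
    ring
  -- choose slot for each element
  have τspec : ∀ v : V, v ∈ parts (Classical.choose (hcover v)) :=
    fun v => Classical.choose_spec (hcover v)
  set τ : V → Fin T := fun v => Classical.choose (hcover v) with hτ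
  -- marginal bound per element of S
  have hmarg : ∀ v ∈ S, f (insert v (G T)) - f (G T) ≤ (3*Γ) * D (τ v) := by
    intro v _
    set t := τ v with ht
    have hvp : v ∈ parts t := τspec v
    have hsubset : G (t:ℕ) ⊆ G T := hchain _ _ (le_of_lt t.isLt) le_rfl
    have h1 : f (G T ∪ {v}) - f (G T) ≤ f (G (t:ℕ) ∪ {v}) - f (G (t:ℕ)) :=
      hsub {v} (G T) (G (t:ℕ)) hsubset
    have e : ∀ A : Finset V, A ∪ {v} = insert v A := by
      intro A; ext x; simp [or_comm]
    rw [e, e] at h1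
    have h2 := hgreedy t v hvp
    have h3 : f (insert v (G (t:ℕ))) - f (G (t:ℕ)) ≤ (3*Γ) * D t := by
      have := mul_le_mul_of_nonneg_left h2 (le_of_lt hΓ3)
      rw [← mul_assoc, mul_one_div, div_self (ne_of_gt hΓ3), one_mul] at this
      simpa [hD] using this
    linarith
  -- injectivity of τ on S
  have hinj : Set.InjOn τ S := by
    intro u hu v hv huv
    by_contra hne'
    have hu2 : u ∈ S ∩ parts (τ u) := Finset.mem_inter.mpr ⟨hu, τspec u⟩
    have hv2 : v ∈ S ∩ parts (τ u) := by
      refine Finset.mem_inter.mpr ⟨hv, ?_⟩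
      rw [huv]; exact τspec v
    have : 2 ≤ (S ∩ parts (τ u)).card := by
      have := Finset.one_lt_card.mpr ⟨u, hu2, v, hv2, hne'⟩
      omega
    have := hS (τ u)
    omega
  -- sum over S
  have hsum1 : ∑ v ∈ S, D (τ v) ≤ ∑ t : Fin T, D t := by
    rw [← Finset.sum_image (fun x hx y hy h => hinj hx hy h)]
    exact Finset.sum_le_sum_of_subset_of_nonneg (Finset.subset_univ _)
      (fun t _ _ => hDnonneg t)
  have key : f S ≤ (3*Γ + 1) * f (G T) := by
    have hS1 : f S ≤ f (G T ∪ S) := hmono _ _ Finset.subset_union_right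
    have hS2 := marg_sum f hsub S (G T)
    have hS3 : ∑ v ∈ S, (f (insert v (G T)) - f (G T)) ≤ ∑ v ∈ S, (3*Γ) * D (τ v) :=
      Finset.sum_le_sum hmarg
    have hS4 : ∑ v ∈ S, (3*Γ) * D (τ v) = (3*Γ) * ∑ v ∈ S, D (τ v) :=
      (Finset.mul_sum _ _ _).symm
    have hS5 : (3*Γ) * ∑ v ∈ S, D (τ v) ≤ (3*Γ) * f (G T) := by
      rw [← hDsum]
      exact mul_le_mul_of_nonneg_left hsum1 (le_of_lt hΓ3)
    nlinarith
  have hpos : (0:ℝ) < 3 * Γ + 1 := by linarith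
  rw [ge_iff_le, one_div, inv_mul_le_iff₀ hpos]
  linarith
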